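/- Suppose U_1,…,U_L and V_1,…,V_L are orthogonal d×d real matrices with V_{l+1} = U_l for l ∈ {1,…,L−1} such that for every t ≥ 0 and every l ∈ {1,…,L}, U_lᵀ·W_l(t)·V_l = diag(W̃_l(t), ρ_l(t)·I_m) for some 2r×2r real matrix W̃_l(t) with W̃_l(0) = ε_l·I_{2r}. Write U_{L,1} for the first 2r columns of U_L and V_{1,1} for the first 2r columns of V_1. Define compressed iterates Ŵ_l(t) ∈ ℝ^{2r×2r} by Ŵ_l(0) := ε_l·I_{2r} and Ŵ_l(t+1) := (1 − ηλ)·Ŵ_l(t) − η·Ŵ_{L:l+1}(t)ᵀ·(Ŵ_{L:1}(t) − U_{L,1}ᵀ·Φ·V_{1,1})·Ŵ_{l−1:1}(t)ᵀ, where Ŵ_{j:i}(t) := Ŵ_j(t)⋯Ŵ_i(t) with empty products equal to I_{2r}. Assume in addition that η·(λ + ∏_{k≠l} ε_k²) ≤ 1 for every l ∈ {1,…,L}. Then for every t ≥ 0, ‖W_{L:1}(t) − U_{L,1}·Ŵ_{L:1}(t)·V_{1,1}ᵀ‖_F² ≤ m·∏_{l=1}^L ε_l², where ‖·‖_F denotes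 the Frobenius norm. -/
import Mathlib


open Matrix BigOperators Filter

noncomputable section

/-- Auxiliary: product of `k` consecutive matrices ending (on the right) at index `i`. -/
def chainAux {n : Type*} [Fintype n] [DecidableEq n]
    (W : ℕ → Matrix n n ℝ) (i : ℕ) : ℕ → Matrix n n ℝ
  | 0 => 1
  | (k+1) => W (i + k) * chainAux W i k

/-- `chain W i j = W j * W (j-1) * ⋯ * W i`; equals `1` when `j < i` (empty product). -/
def chain {n : Type*} [Fintype n] [DecidableEq n]
    (W : ℕ → Matrix n n ℝ) (i j : ℕ) : Matrix n n ℝ :=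
  chainAux W i (j + 1 - i)

/-- `blockDiag r m A B` is the `(2r+m)×(2r+m)` block-diagonal matrix `diag(A, B)`
with top-left block `A` (of size `2r×2r`) and bottom-right block `B` (of size `m×m`). -/
def blockDiag (r m : ℕ) (A : Matrix (Fin (2*r)) (Fin (2*r)) ℝ)
    (B : Matrix (Fin m) (Fin m) ℝ) : Matrix (Fin (2*r + m)) (Fin (2*r + m)) ℝ :=
  Matrix.reindex finSumFinEquiv finSumFinEquiv (Matrix.fromBlocks A 0 0 B)

/-- The `d×2r` matrix formed by the first `2r` columns of a `(2r+m)×(2r+m)` matrix. -/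
def cols1 (r m : ℕ) (U : Matrix (Fin (2*r + m)) (Fin (2*r + m)) ℝ) :
    Matrix (Fin (2*r + m)) (Fin (2*r)) ℝ :=
  fun i j => U i (Fin.castAdd m j)

/-- The `d×m` matrix formed by the last `m` columns of a `(2r+m)×(2r+m)` matrix. -/
def cols2 (r m : ℕ) (U : Matrix (Fin (2*r + m)) (Fin (2*r + m)) ℝ) :
    Matrix (Fin (2*r + m)) (Fin m) ℝ :=
  fun i j => U i (Fin.natAdd (2*r) j)

/-- Squared Frobenius norm: `‖A‖_F² = trace(AᵀA)`. -/
def frobSq {p q : Type*} [Fintype p] [Fintype q] (A : Matrix p q ℝ) : ℝ :=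
  Matrix.trace (Aᵀ * A)

/-- Frobenius norm: `‖A‖_F = √(trace(AᵀA))`. -/
def frobNorm {p q : Type*} [Fintype p] [Fintype q] (A : Matrix p q ℝ) : ℝ :=
  Real.sqrt (Matrix.trace (Aᵀ * A))

namespace Stmt1Aux

variable {n : Type*} [Fintype n] [DecidableEq n]

lemma chain_self (W : ℕ → Matrix n n ℝ) (i : ℕ) : chain W i i = W i := by
  simp [chain, chainAux]

lemma chain_empty (W : ℕ → Matrix n n ℝ) {i j : ℕ} (h : j < i) : chain W i j = 1 := by
  have h0 : j + 1 - i = 0 := by omega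
  simp [chain, h0, chainAux]

lemma chain_succ (W : ℕ → Matrix n n ℝ) {i j : ℕ} (h : i ≤ j + 1) :
    chain W i (j+1) = W (j+1) * chain W i j := by
  have h2 : j + 1 + 1 - i = (j + 1 - i) + 1 := by omega
  have h3 : i + (j + 1 - i) = j + 1 := by omega
  simp only [chain, h2, chainAux, h3]

lemma chain_congr {W W' : ℕ → Matrix n n ℝ} {i j : ℕ}
    (h : ∀ k, i ≤ k → k ≤ j → W k = W' k) : chain W i j = chain W' i j := by
  rcases lt_or_ge j i with hj | hj
  · rw [chain_empty W hj, chain_empty W' hj]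
  · induction j with
    | zero => have h0 : i = 0 := by omega
              subst h0; rw [chain_self, chain_self, h 0 le_rfl le_rfl]
    | succ j ih =>
      rcases lt_or_ge j i with hj2 | hj2
      · have h0 : i = j + 1 := by omega
        subst h0
        rw [chain_self, chain_self, h (j+1) le_rfl le_rfl]
      · rw [chain_succ W (by omega), chain_succ W' (by omega),
          h (j+1) (by omega) le_rfl, ih (fun k hk hk2 => h k hk (by omega)) hj2]

variable {r m : ℕ}

lemma blockDiag_flat (A : Matrix (Fin (2*r)) (Fin (2*r)) ℝ) (B : Matrix (Fin m) (Fin m) ℝ) :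
    (blockDiag r m A B).submatrix (finSumFinEquiv (m := 2*r) (n := m))
      (finSumFinEquiv (m := 2*r) (n := m)) = Matrix.fromBlocks A 0 0 B := by
  simp [_root_.blockDiag, Matrix.reindex]

lemma blockDiag_one : blockDiag r m 1 1 = (1 : Matrix (Fin (2*r+m)) (Fin (2*r+m)) ℝ) := by
  simp [_root_.blockDiag, Matrix.fromBlocks_one]

lemma blockDiag_mul (A A' : Matrix (Fin (2*r)) (Fin (2*r)) ℝ) (B B' : Matrix (Fin m) (Fin m) ℝ) :
    blockDiag r m A B * blockDiag r m A' B' = blockDiag r m (A * A') (B * B') := by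
  simp [_root_.blockDiag, Matrix.reindex, Matrix.submatrix_mul_equiv, Matrix.fromBlocks_multiply]

lemma blockDiag_transpose (A : Matrix (Fin (2*r)) (Fin (2*r)) ℝ) (B : Matrix (Fin m) (Fin m) ℝ) :
    (blockDiag r m A B)ᵀ = blockDiag r m Aᵀ Bᵀ := by
  simp [_root_.blockDiag, Matrix.transpose_submatrix, Matrix.fromBlocks_transpose, Matrix.reindex]

lemma fromBlocks_sub' (A A' : Matrix (Fin (2*r)) (Fin (2*r)) ℝ) (B B' : Matrix (Fin m) (Fin m) ℝ) :
    Matrix.fromBlocks A (0:Matrix _ (Fin m) ℝ) (0:Matrix (Fin m) _ ℝ) B - Matrix.fromBlocks A' 0 0 B'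
      = Matrix.fromBlocks (A - A') 0 0 (B - B') := by
  rw [sub_eq_add_neg, Matrix.fromBlocks_neg, Matrix.fromBlocks_add]
  simp [sub_eq_add_neg]

lemma fromBlocks_smul' (c : ℝ) (A : Matrix (Fin (2*r)) (Fin (2*r)) ℝ) (B : Matrix (Fin m) (Fin m) ℝ) :
    c • Matrix.fromBlocks A (0:Matrix _ (Fin m) ℝ) (0:Matrix (Fin m) _ ℝ) B
      = Matrix.fromBlocks (c • A) 0 0 (c • B) := by
  rw [Matrix.fromBlocks_smul]
  simp

lemma blockDiag_sub (A A' : Matrix (Fin (2*r)) (Fin (2*r)) ℝ) (B B' : Matrix (Fin m) (Fin m) ℝ) :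
    blockDiag r m A B - blockDiag r m A' B' = blockDiag r m (A - A') (B - B') := by
  simp only [_root_.blockDiag, Matrix.reindex_apply, ← fromBlocks_sub']
  ext i j
  simp [Matrix.submatrix_apply, Matrix.sub_apply]

lemma blockDiag_smul (c : ℝ) (A : Matrix (Fin (2*r)) (Fin (2*r)) ℝ) (B : Matrix (Fin m) (Fin m) ℝ) :
    c • blockDiag r m A B = blockDiag r m (c • A) (c • B) := by
  simp only [_root_.blockDiag, Matrix.reindex_apply, ← fromBlocks_smul']
  ext i j
  simp [Matrix.submatrix_apply, Matrix.smul_apply]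

lemma trace_blockDiag (A : Matrix (Fin (2*r)) (Fin (2*r)) ℝ) (B : Matrix (Fin m) (Fin m) ℝ) :
    Matrix.trace (blockDiag r m A B) = Matrix.trace A + Matrix.trace B := by
  have h : Matrix.trace (blockDiag r m A B)
      = Matrix.trace ((blockDiag r m A B).submatrix (finSumFinEquiv (m := 2*r) (n := m))
          (finSumFinEquiv (m := 2*r) (n := m))) := by
    simp only [Matrix.trace, Matrix.diag, Matrix.submatrix_apply]
    exact (Equiv.sum_comp finSumFinEquiv _).symm
  rw [h, blockDiag_flat]
  simp [Matrix.trace, Matrix.diag, Fintype.sum_sum_type, Matrix.fromBlocks]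

/-- inclusion of the first block of columns -/
def iota (r m : ℕ) : Matrix (Fin (2*r+m)) (Fin (2*r)) ℝ := cols1 r m 1

/-- inclusion of the second block of columns -/
def kappa (r m : ℕ) : Matrix (Fin (2*r+m)) (Fin m) ℝ := cols2 r m 1

/-- top-left `2r × 2r` block -/
def TL (r m : ℕ) (M : Matrix (Fin (2*r+m)) (Fin (2*r+m)) ℝ) : Matrix (Fin (2*r)) (Fin (2*r)) ℝ :=
  fun i j => M (Fin.castAdd m i) (Fin.castAdd m j)

lemma castAdd_ne_natAdd (i : Fin (2*r)) (j : Fin m) :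
    Fin.castAdd m i ≠ Fin.natAdd (2*r) j := by
  simp only [ne_eq, Fin.ext_iff, Fin.coe_castAdd, Fin.coe_natAdd]
  omega

lemma cols1_eq_mul (U : Matrix (Fin (2*r+m)) (Fin (2*r+m)) ℝ) :
    cols1 r m U = U * iota r m := by
  ext a i
  simp [cols1, iota, Matrix.mul_apply, Matrix.one_apply]

lemma cols2_eq_mul (U : Matrix (Fin (2*r+m)) (Fin (2*r+m)) ℝ) :
    cols2 r m U = U * kappa r m := by
  ext a i
  simp [cols2, kappa, cols2, Matrix.mul_apply, Matrix.one_apply]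

lemma iotaT_mul {p : Type*} [Fintype p] (M : Matrix (Fin (2*r+m)) p ℝ) :
    (iota r m)ᵀ * M = fun i b => M (Fin.castAdd m i) b := by
  ext i b
  simp [iota, cols1, Matrix.mul_apply, Matrix.one_apply]

lemma kappaT_mul {p : Type*} [Fintype p] (M : Matrix (Fin (2*r+m)) p ℝ) :
    (kappa r m)ᵀ * M = fun j b => M (Fin.natAdd (2*r) j) b := by
  ext j b
  simp [kappa, cols2, Matrix.mul_apply, Matrix.one_apply]

lemma TL_eq (M : Matrix (Fin (2*r+m)) (Fin (2*r+m)) ℝ) :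
    TL r m M = (iota r m)ᵀ * M * iota r m := by
  rw [show (iota r m)ᵀ * M * iota r m = (iota r m)ᵀ * (M * iota r m) from Matrix.mul_assoc _ _ _,
    iotaT_mul]
  ext i j
  simp [TL, iota, cols1, Matrix.mul_apply, Matrix.one_apply]

lemma iotaT_iota : (iota r m)ᵀ * iota r m = 1 := by
  rw [iotaT_mul]
  ext i j
  simp [iota, cols1, Matrix.one_apply]

lemma kappaT_kappa : (kappa r m)ᵀ * kappa r m = 1 := by
  rw [kappaT_mul]
  ext i j
  simp [kappa, cols2, Matrix.one_apply, Fin.ext_iff]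

lemma iotaT_kappa : (iota r m)ᵀ * kappa r m = 0 := by
  rw [iotaT_mul]
  ext i j
  simp [kappa, cols2, Matrix.one_apply, castAdd_ne_natAdd]

lemma kappaT_iota : (kappa r m)ᵀ * iota r m = 0 := by
  rw [kappaT_mul]
  ext i j
  simp [iota, cols1, Matrix.one_apply, (castAdd_ne_natAdd j i).symm]

lemma blockDiag_split (A : Matrix (Fin (2*r)) (Fin (2*r)) ℝ) (B : Matrix (Fin m) (Fin m) ℝ) :
    blockDiag r m A B = iota r m * A * (iota r m)ᵀ + kappa r m * B * (kappa r m)ᵀ := by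
  ext a b
  obtain ⟨x, rfl⟩ := finSumFinEquiv.surjective a
  obtain ⟨y, rfl⟩ := finSumFinEquiv.surjective b
  have hL : ∀ i : Fin (2*r), finSumFinEquiv (Sum.inl i) = Fin.castAdd m i := fun i =>
    finSumFinEquiv_apply_left i
  have hR : ∀ j : Fin m, finSumFinEquiv (Sum.inr j) = Fin.natAdd (2*r) j := fun j =>
    finSumFinEquiv_apply_right j
  have hBD : blockDiag r m A B (finSumFinEquiv x) (finSumFinEquiv y)
      = Matrix.fromBlocks A 0 0 B x y := by
    simp [_root_.blockDiag, Matrix.reindex_apply, Matrix.submatrix_apply]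
  rw [hBD]
  have hiota : ∀ (x : Fin (2*r) ⊕ Fin m) (i : Fin (2*r)),
      iota r m (finSumFinEquiv x) i = if x = Sum.inl i then 1 else 0 := by
    intro x i
    cases x with
    | inl a => simp [iota, cols1, Matrix.one_apply, hL, Fin.castAdd_inj]
    | inr b => simp [iota, cols1, Matrix.one_apply, hR, (castAdd_ne_natAdd i b).symm]
  have hkappa : ∀ (x : Fin (2*r) ⊕ Fin m) (j : Fin m),
      kappa r m (finSumFinEquiv x) j = if x = Sum.inr j then 1 else 0 := by
    intro x j
    cases x with
    | inl a => simp [kappa, cols2, Matrix.one_apply, hL, castAdd_ne_natAdd]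
    | inr b => simp [kappa, cols2, Matrix.one_apply, hR, Fin.ext_iff]
  simp only [Matrix.add_apply, Matrix.mul_apply, Matrix.transpose_apply, hiota, hkappa]
  cases x <;> cases y <;>
    simp [Matrix.fromBlocks, Finset.sum_ite_eq', ite_mul, mul_ite]

lemma TL_blockDiag (A : Matrix (Fin (2*r)) (Fin (2*r)) ℝ) (B : Matrix (Fin m) (Fin m) ℝ) :
    TL r m (blockDiag r m A B) = A := by
  rw [TL_eq, blockDiag_split]
  simp only [Matrix.mul_add, Matrix.add_mul, ← Matrix.mul_assoc]
  rw [iotaT_iota, iotaT_kappa]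
  simp only [Matrix.one_mul, Matrix.zero_mul]
  rw [Matrix.mul_assoc A, iotaT_iota]
  simp

lemma TL_sub (M N : Matrix (Fin (2*r+m)) (Fin (2*r+m)) ℝ) :
    TL r m (M - N) = TL r m M - TL r m N := rfl

lemma TL_smul (c : ℝ) (M : Matrix (Fin (2*r+m)) (Fin (2*r+m)) ℝ) :
    TL r m (c • M) = c • TL r m M := rfl

lemma TL_sandwich (A A' : Matrix (Fin (2*r)) (Fin (2*r)) ℝ) (B B' : Matrix (Fin m) (Fin m) ℝ)
    (M : Matrix (Fin (2*r+m)) (Fin (2*r+m)) ℝ) :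
    TL r m (blockDiag r m A B * M * blockDiag r m A' B') = A * TL r m M * A' := by
  rw [TL_eq, TL_eq, blockDiag_split, blockDiag_split]
  have expand : (iota r m)ᵀ * ((iota r m * A * (iota r m)ᵀ + kappa r m * B * (kappa r m)ᵀ) * M *
      (iota r m * A' * (iota r m)ᵀ + kappa r m * B' * (kappa r m)ᵀ)) * iota r m
      = ((iota r m)ᵀ * (iota r m * A * (iota r m)ᵀ + kappa r m * B * (kappa r m)ᵀ)) * M *
        ((iota r m * A' * (iota r m)ᵀ + kappa r m * B' * (kappa r m)ᵀ) * iota r m) := by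
    simp only [Matrix.mul_assoc]
  rw [expand]
  have h1 : (iota r m)ᵀ * (iota r m * A * (iota r m)ᵀ + kappa r m * B * (kappa r m)ᵀ)
      = A * (iota r m)ᵀ := by
    simp only [Matrix.mul_add, ← Matrix.mul_assoc, iotaT_iota, iotaT_kappa]
    simp
  have h2 : (iota r m * A' * (iota r m)ᵀ + kappa r m * B' * (kappa r m)ᵀ) * iota r m
      = iota r m * A' := by
    simp only [Matrix.add_mul, Matrix.mul_assoc, iotaT_iota, kappaT_iota]
    simp
  rw [h1, h2]
  simp only [Matrix.mul_assoc]

lemma TL_conj (P Q Φ : Matrix (Fin (2*r+m)) (Fin (2*r+m)) ℝ) :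
    TL r m (Pᵀ * Φ * Q) = (cols1 r m P)ᵀ * Φ * cols1 r m Q := by
  rw [TL_eq, cols1_eq_mul, cols1_eq_mul, Matrix.transpose_mul]
  simp only [Matrix.mul_assoc]

lemma smul_one_mul_smul_one (a b : ℝ) :
    (a • (1 : Matrix (Fin m) (Fin m) ℝ)) * (b • 1) = (a * b) • 1 := by
  simp [Matrix.smul_mul, Matrix.mul_smul, smul_smul, mul_comm]

end Stmt1Aux

open Stmt1Aux

/-- Proposition 1: the compressed trajectory stays within
`√(m·∏ εₗ²)` of the original end-to-end trajectory (in squared Frobenius norm). -/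
theorem statement1
    (r m : ℕ) (hm : 0 < m) (L : ℕ) (hL : 1 ≤ L)
    (Φ : Matrix (Fin (2*r + m)) (Fin (2*r + m)) ℝ) (hΦ : Φ.rank ≤ r)
    (ε : ℕ → ℝ) (hε : ∀ l, 1 ≤ l → l ≤ L → 0 < ε l)
    (η lam : ℝ) (hη : 0 < η) (hlam : 0 ≤ lam)
    (W : ℕ → ℕ → Matrix (Fin (2*r + m)) (Fin (2*r + m)) ℝ)
    (hW0 : ∀ l, 1 ≤ l → l ≤ L →
      W 0 l * (W 0 l)ᵀ = (ε l)^2 • (1 : Matrix (Fin (2*r + m)) (Fin (2*r + m)) ℝ) ∧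
      (W 0 l)ᵀ * W 0 l = (ε l)^2 • (1 : Matrix (Fin (2*r + m)) (Fin (2*r + m)) ℝ))
    (hWupd : ∀ t l, 1 ≤ l → l ≤ L →
      W (t+1) l = (1 - η * lam) • W t l
        - η • ((chain (W t) (l+1) L)ᵀ * (chain (W t) 1 L - Φ) * (chain (W t) 1 (l-1))ᵀ))
    (ρ : ℕ → ℕ → ℝ)
    (hρ0 : ∀ l, ρ 0 l = ε l)
    (hρ : ∀ t l, ρ (t+1) l
      = ρ t l * (1 - η * lam - η * ∏ k ∈ (Finset.Icc 1 L).erase l, (ρ t k)^2))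
    -- the block-diagonal decomposition hypothesis
    (U V : ℕ → Matrix (Fin (2*r + m)) (Fin (2*r + m)) ℝ)
    (hU : ∀ l, 1 ≤ l → l ≤ L → ((U l)ᵀ * U l = 1 ∧ U l * (U l)ᵀ = 1))
    (hV : ∀ l, 1 ≤ l → l ≤ L → ((V l)ᵀ * V l = 1 ∧ V l * (V l)ᵀ = 1))
    (hUV : ∀ l, 1 ≤ l → l + 1 ≤ L → V (l+1) = U l)
    (Wtil : ℕ → ℕ → Matrix (Fin (2*r)) (Fin (2*r)) ℝ)
    (hdecomp : ∀ t l, 1 ≤ l → l ≤ L →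
      (U l)ᵀ * W t l * V l = blockDiag r m (Wtil t l) (ρ t l • 1))
    (hWtil0 : ∀ l, 1 ≤ l → l ≤ L → Wtil 0 l = ε l • 1)
    -- the compressed iterates
    (What : ℕ → ℕ → Matrix (Fin (2*r)) (Fin (2*r)) ℝ)
    (hWhat0 : ∀ l, 1 ≤ l → l ≤ L → What 0 l = ε l • 1)
    (hWhatupd : ∀ t l, 1 ≤ l → l ≤ L →
      What (t+1) l = (1 - η * lam) • What t l
        - η • ((chain (What t) (l+1) L)ᵀ
            * (chain (What t) 1 L - (cols1 r m (U L))ᵀ * Φ * cols1 r m (V 1))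
            * (chain (What t) 1 (l-1))ᵀ))
    -- step-size condition
    (hstep : ∀ l, 1 ≤ l → l ≤ L →
      η * (lam + ∏ k ∈ (Finset.Icc 1 L).erase l, (ε k)^2) ≤ 1) :
    ∀ t : ℕ,
      frobSq (chain (W t) 1 L - cols1 r m (U L) * chain (What t) 1 L * (cols1 r m (V 1))ᵀ)
        ≤ (m : ℝ) * ∏ l ∈ Finset.Icc 1 L, (ε l)^2 := by
  -- Step 0: recover W from the decomposition
  have hWdec : ∀ t l, 1 ≤ l → l ≤ L →
      W t l = U l * blockDiag r m (Wtil t l) (ρ t l • 1) * (V l)ᵀ := by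
    intro t l h1 h2
    rw [← hdecomp t l h1 h2]
    calc W t l = (U l * (U l)ᵀ) * W t l * (V l * (V l)ᵀ) := by
          rw [(hU l h1 h2).2, (hV l h1 h2).2, Matrix.one_mul, Matrix.mul_one]
      _ = U l * ((U l)ᵀ * W t l * V l) * (V l)ᵀ := by simp only [Matrix.mul_assoc]
  -- general sandwich product
  have sandwich : ∀ (P Q R X Y : Matrix (Fin (2*r+m)) (Fin (2*r+m)) ℝ),
      Qᵀ * Q = 1 → (P * X * Qᵀ) * (Q * Y * Rᵀ) = P * (X * Y) * Rᵀ := by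
    intro P Q R X Y hQ
    calc (P * X * Qᵀ) * (Q * Y * Rᵀ) = P * (X * ((Qᵀ * Q) * (Y * Rᵀ))) := by
          simp only [Matrix.mul_assoc]
      _ = P * (X * Y) * Rᵀ := by rw [hQ, Matrix.one_mul]; simp only [Matrix.mul_assoc]
  -- Step 1: chain decomposition
  have hchain : ∀ t i j, 1 ≤ i → i ≤ j → j ≤ L →
      chain (W t) i j = U j * blockDiag r m (chain (Wtil t) i j)
        ((∏ k ∈ Finset.Icc i j, ρ t k) • 1) * (V i)ᵀ := by
    intro t i j
    induction j with
    | zero => intro h1 h2 h3; omega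
    | succ j ih =>
      intro h1 h2 h3
      rcases Nat.lt_or_ge i (j+1) with hij | hij
      · have hrec := ih h1 (by omega) (by omega)
        rw [chain_succ (W t) (by omega), chain_succ (Wtil t) (by omega), hrec,
          hWdec t (j+1) (by omega) h3, hUV j (by omega) h3,
          sandwich _ _ _ _ _ (hU j (by omega) (by omega)).1,
          Stmt1Aux.blockDiag_mul, smul_one_mul_smul_one,
          Finset.prod_Icc_succ_top (by omega : i ≤ j + 1), mul_comm (ρ t (j+1))]
      · have h0 : i = j + 1 := by omega
        subst h0
        rw [chain_self, chain_self, Finset.Icc_self, Finset.prod_singleton]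
        exact hWdec t (j+1) h1 h3
  -- Step 2a: left partial chain times U l
  have hleft : ∀ t l, 1 ≤ l → l ≤ L →
      chain (W t) (l+1) L * U l = U L * blockDiag r m (chain (Wtil t) (l+1) L)
        ((∏ k ∈ Finset.Icc (l+1) L, ρ t k) • 1) := by
    intro t l h1 h2
    rcases eq_or_lt_of_le h2 with rfl | hlt
    · rw [chain_empty (W t) (by omega), chain_empty (Wtil t) (by omega),
        Finset.Icc_eq_empty (by omega), Finset.prod_empty, one_smul, Stmt1Aux.blockDiag_one,
        Matrix.one_mul, Matrix.mul_one]
    · rw [hchain t (l+1) L (by omega) (by omega) le_rfl, hUV l h1 (by omega),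
        Matrix.mul_assoc, (hU l h1 h2).1, Matrix.mul_one]
  -- Step 2b: V lᵀ times right partial chain
  have hright : ∀ t l, 1 ≤ l → l ≤ L →
      (V l)ᵀ * chain (W t) 1 (l-1) = blockDiag r m (chain (Wtil t) 1 (l-1))
        ((∏ k ∈ Finset.Icc 1 (l-1), ρ t k) • 1) * (V 1)ᵀ := by
    intro t l h1 h2
    rcases eq_or_lt_of_le h1 with h1' | h1'
    · rw [← h1']
      rw [chain_empty (W t) (by omega), chain_empty (Wtil t) (by omega),
        Finset.Icc_eq_empty (by omega), Finset.prod_empty, one_smul, Stmt1Aux.blockDiag_one,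
        Matrix.one_mul, Matrix.mul_one]
    · have hV' : V l = U (l-1) := by
        have h := hUV (l-1) (by omega) (by omega)
        rwa [Nat.sub_add_cancel (by omega)] at h
      rw [hchain t 1 (l-1) le_rfl (by omega) (by omega), hV']
      simp only [← Matrix.mul_assoc]
      rw [(hU (l-1) (by omega) (by omega)).1, Matrix.one_mul]
  -- the full middle term
  have hmidU : ∀ t, (U L)ᵀ * chain (W t) 1 L * V 1
      = blockDiag r m (chain (Wtil t) 1 L) ((∏ k ∈ Finset.Icc 1 L, ρ t k) • 1) := by
    intro t
    rw [hchain t 1 L le_rfl hL le_rfl]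
    simp only [← Matrix.mul_assoc]
    rw [(hU L hL le_rfl).1, Matrix.one_mul, Matrix.mul_assoc, (hV 1 le_rfl hL).1,
      Matrix.mul_one]
  -- Step 3: the compressed iterates coincide with the top-left blocks
  have hWW : ∀ t l, 1 ≤ l → l ≤ L → Wtil t l = What t l := by
    intro t
    induction t with
    | zero => intro l h1 h2; rw [hWtil0 l h1 h2, hWhat0 l h1 h2]
    | succ t ih =>
      intro l h1 h2
      have e2core : (U l)ᵀ * ((chain (W t) (l+1) L)ᵀ * (chain (W t) 1 L - Φ)
            * (chain (W t) 1 (l-1))ᵀ) * V l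
          = (blockDiag r m (chain (Wtil t) (l+1) L) ((∏ k ∈ Finset.Icc (l+1) L, ρ t k) • 1))ᵀ
            * (blockDiag r m (chain (Wtil t) 1 L) ((∏ k ∈ Finset.Icc 1 L, ρ t k) • 1)
                - (U L)ᵀ * Φ * V 1)
            * (blockDiag r m (chain (Wtil t) 1 (l-1)) ((∏ k ∈ Finset.Icc 1 (l-1), ρ t k) • 1))ᵀ := by
        have hA : (U l)ᵀ * (chain (W t) (l+1) L)ᵀ
            = (blockDiag r m (chain (Wtil t) (l+1) L)
                ((∏ k ∈ Finset.Icc (l+1) L, ρ t k) • 1))ᵀ * (U L)ᵀ := by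
          rw [← Matrix.transpose_mul, hleft t l h1 h2, Matrix.transpose_mul]
        have hB : (chain (W t) 1 (l-1))ᵀ * V l
            = V 1 * (blockDiag r m (chain (Wtil t) 1 (l-1))
                ((∏ k ∈ Finset.Icc 1 (l-1), ρ t k) • 1))ᵀ := by
          have h := congrArg Matrix.transpose (hright t l h1 h2)
          rw [Matrix.transpose_mul, Matrix.transpose_mul, Matrix.transpose_transpose,
            Matrix.transpose_transpose] at h
          exact h
        have hM : (U L)ᵀ * (chain (W t) 1 L - Φ) * V 1
            = blockDiag r m (chain (Wtil t) 1 L) ((∏ k ∈ Finset.Icc 1 L, ρ t k) • 1)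
              - (U L)ᵀ * Φ * V 1 := by
          rw [Matrix.mul_sub, Matrix.sub_mul, hmidU t]
        calc (U l)ᵀ * ((chain (W t) (l+1) L)ᵀ * (chain (W t) 1 L - Φ)
              * (chain (W t) 1 (l-1))ᵀ) * V l
            = ((U l)ᵀ * (chain (W t) (l+1) L)ᵀ) * (chain (W t) 1 L - Φ)
              * ((chain (W t) 1 (l-1))ᵀ * V l) := by simp only [Matrix.mul_assoc]
          _ = _ := by
              rw [hA, hB, ← hM]
              simp only [Matrix.mul_assoc]
      have key : (U l)ᵀ * W (t+1) l * V l
          = (1 - η*lam) • blockDiag r m (Wtil t l) (ρ t l • 1)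
            - η • ((blockDiag r m (chain (Wtil t) (l+1) L)
                  ((∏ k ∈ Finset.Icc (l+1) L, ρ t k) • 1))ᵀ
                * (blockDiag r m (chain (Wtil t) 1 L) ((∏ k ∈ Finset.Icc 1 L, ρ t k) • 1)
                    - (U L)ᵀ * Φ * V 1)
                * (blockDiag r m (chain (Wtil t) 1 (l-1))
                    ((∏ k ∈ Finset.Icc 1 (l-1), ρ t k) • 1))ᵀ) := by
        rw [hWupd t l h1 h2, Matrix.mul_sub, Matrix.sub_mul]
        rw [Matrix.mul_smul, Matrix.smul_mul, hdecomp t l h1 h2]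
        rw [Matrix.mul_smul, Matrix.smul_mul, e2core]
      have hTL : Wtil (t+1) l = TL r m ((U l)ᵀ * W (t+1) l * V l) := by
        rw [hdecomp (t+1) l h1 h2, TL_blockDiag]
      rw [hTL, key, TL_sub, TL_smul, TL_smul, TL_blockDiag, Stmt1Aux.blockDiag_transpose,
        Stmt1Aux.blockDiag_transpose, TL_sandwich, TL_sub, TL_blockDiag, TL_conj]
      rw [hWhatupd t l h1 h2]
      rw [ih l h1 h2,
        show chain (Wtil t) (l+1) L = chain (What t) (l+1) L from
          chain_congr (fun k hk hk2 => ih k (by omega) hk2),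
        show chain (Wtil t) 1 L = chain (What t) 1 L from
          chain_congr (fun k hk hk2 => ih k hk hk2),
        show chain (Wtil t) 1 (l-1) = chain (What t) 1 (l-1) from
          chain_congr (fun k hk hk2 => ih k hk (by omega))]
  -- Step 4: the residual factors stay bounded
  have hρbd : ∀ t l, 1 ≤ l → l ≤ L → |ρ t l| ≤ ε l := by
    intro t
    induction t with
    | zero => intro l h1 h2; rw [hρ0, abs_of_pos (hε l h1 h2)]
    | succ t ih =>
      intro l h1 h2
      rw [hρ t l, abs_mul]
      have hprod_le : ∏ k ∈ (Finset.Icc 1 L).erase l, (ρ t k)^2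
          ≤ ∏ k ∈ (Finset.Icc 1 L).erase l, (ε k)^2 := by
        apply Finset.prod_le_prod (fun k _ => sq_nonneg _)
        intro k hk
        have hk' := Finset.mem_Icc.mp (Finset.mem_of_mem_erase hk)
        calc (ρ t k)^2 = |ρ t k|^2 := (sq_abs _).symm
          _ ≤ (ε k)^2 := pow_le_pow_left₀ (abs_nonneg _) (ih k hk'.1 hk'.2) 2
      have hprod_nonneg : (0:ℝ) ≤ ∏ k ∈ (Finset.Icc 1 L).erase l, (ρ t k)^2 :=
        Finset.prod_nonneg (fun k _ => sq_nonneg _)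
      have hfac : |1 - η*lam - η * ∏ k ∈ (Finset.Icc 1 L).erase l, (ρ t k)^2| ≤ 1 := by
        have hstep' := hstep l h1 h2
        have hle : η * ∏ k ∈ (Finset.Icc 1 L).erase l, (ρ t k)^2
            ≤ η * ∏ k ∈ (Finset.Icc 1 L).erase l, (ε k)^2 :=
          mul_le_mul_of_nonneg_left hprod_le hη.le
        rw [abs_le]
        constructor
        · nlinarith
        · nlinarith [mul_nonneg hη.le hlam, mul_nonneg hη.le hprod_nonneg]
      calc |ρ t l| * |1 - η*lam - η * ∏ k ∈ (Finset.Icc 1 L).erase l, (ρ t k)^2|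
          ≤ ε l * 1 := mul_le_mul (ih l h1 h2) hfac (abs_nonneg _) (hε l h1 h2).le
        _ = ε l := mul_one _
  -- Step 5: final computation
  intro t
  set P : ℝ := ∏ k ∈ Finset.Icc 1 L, ρ t k with hP
  have hdiff : chain (W t) 1 L - cols1 r m (U L) * chain (What t) 1 L * (cols1 r m (V 1))ᵀ
      = U L * blockDiag r m 0 (P • 1) * (V 1)ᵀ := by
    rw [hchain t 1 L le_rfl hL le_rfl,
      show chain (Wtil t) 1 L = chain (What t) 1 L from
        chain_congr (fun k hk hk2 => hWW t k hk hk2)]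
    have hcol : cols1 r m (U L) * chain (What t) 1 L * (cols1 r m (V 1))ᵀ
        = U L * blockDiag r m (chain (What t) 1 L) 0 * (V 1)ᵀ := by
      rw [cols1_eq_mul, cols1_eq_mul, Stmt1Aux.blockDiag_split]
      simp only [Matrix.mul_zero, Matrix.zero_mul, add_zero]
      rw [Matrix.transpose_mul]
      simp only [Matrix.mul_assoc]
    rw [hcol]
    have fact : ∀ X Y : Matrix (Fin (2*r+m)) (Fin (2*r+m)) ℝ,
        U L * X * (V 1)ᵀ - U L * Y * (V 1)ᵀ = U L * (X - Y) * (V 1)ᵀ := by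
      intro X Y; rw [Matrix.mul_sub, Matrix.sub_mul]
    rw [fact, Stmt1Aux.blockDiag_sub, sub_self, sub_zero]
  rw [hdiff]
  have h1 : (U L * blockDiag r m 0 (P • 1) * (V 1)ᵀ)ᵀ * (U L * blockDiag r m 0 (P • 1) * (V 1)ᵀ)
      = V 1 * ((blockDiag r m 0 (P • 1))ᵀ * blockDiag r m 0 (P • 1)) * (V 1)ᵀ := by
    rw [Matrix.transpose_mul, Matrix.transpose_mul, Matrix.transpose_transpose]
    calc V 1 * ((blockDiag r m 0 (P • 1))ᵀ * (U L)ᵀ) * (U L * blockDiag r m 0 (P • 1) * (V 1)ᵀ)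
        = V 1 * ((blockDiag r m 0 (P • 1))ᵀ * (((U L)ᵀ * U L) * (blockDiag r m 0 (P • 1) * (V 1)ᵀ))) := by
          simp only [Matrix.mul_assoc]
      _ = _ := by rw [(hU L hL le_rfl).1, Matrix.one_mul]; simp only [Matrix.mul_assoc]
  have h2 : frobSq (U L * blockDiag r m 0 (P • 1) * (V 1)ᵀ) = (m:ℝ) * P^2 := by
    rw [frobSq, h1]
    have h3 : Matrix.trace (V 1 * ((blockDiag r m 0 (P • 1))ᵀ * blockDiag r m 0 (P • 1)) * (V 1)ᵀ)
        = Matrix.trace ((blockDiag r m 0 (P • 1))ᵀ * blockDiag r m 0 (P • 1)) := by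
      rw [Matrix.mul_assoc, Matrix.trace_mul_comm, Matrix.mul_assoc, Matrix.mul_assoc]
      rw [(hV 1 le_rfl hL).1, Matrix.mul_one]
    rw [h3, Stmt1Aux.blockDiag_transpose, Stmt1Aux.blockDiag_mul, Matrix.transpose_zero, Matrix.mul_zero,
      Matrix.transpose_smul, Matrix.transpose_one, smul_one_mul_smul_one, Stmt1Aux.trace_blockDiag]
    simp [Matrix.trace_smul, Matrix.trace_one, sq]
    ring
  rw [h2]
  have hPsq : P^2 = ∏ k ∈ Finset.Icc 1 L, (ρ t k)^2 := by
    rw [hP, ← Finset.prod_pow]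
  have hle : P^2 ≤ ∏ l ∈ Finset.Icc 1 L, (ε l)^2 := by
    rw [hPsq]
    apply Finset.prod_le_prod (fun k _ => sq_nonneg _)
    intro k hk
    have hk' := Finset.mem_Icc.mp hk
    calc (ρ t k)^2 = |ρ t k|^2 := (sq_abs _).symm
      _ ≤ (ε k)^2 := pow_le_pow_left₀ (abs_nonneg _) (hρbd t k hk'.1 hk'.2) 2
  exact mul_le_mul_of_nonneg_left hle (Nat.cast_nonneg m)
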